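/- Let {X_n} be a sequence of random variables and p a positive integer. If there exists a real number r such that E[X_n^{2p−q} X_m^{q}] → r as m, n → ∞ for every q with 0 ≤ q ≤ 2p, then X_n converges in L^{2p}(Ω). -/

import Mathlib

open MeasureTheory Filter

theorem stmt6 {Ω : Type*} {mΩ : MeasurableSpace Ω} {μ : Measure Ω}
    [IsProbabilityMeasure μ]
    (X : ℕ → Ω → ℝ) (p : ℕ) (hp : 0 < p)
    (hmom : ∀ n, MemLp (X n) ((2 * p : ℕ) : ENNReal) μ)
    (r : ℝ)
    (hconv : ∀ q ≤ 2 * p,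
      Tendsto (fun nm : ℕ × ℕ => ∫ ω, (X nm.1 ω) ^ (2 * p - q) * (X nm.2 ω) ^ q ∂μ)
        atTop (nhds r)) :
    ∃ Y : Ω → ℝ,
      Tendsto (fun n => ∫ ω, |X n ω - Y ω| ^ (2 * p) ∂μ) atTop (nhds 0) := by
  have hPne : 2 * p ≠ 0 := by omega
  have hpe0 : ((2 * p : ℕ) : ENNReal) ≠ 0 := Nat.cast_ne_zero.mpr hPne
  have hpet : ((2 * p : ℕ) : ENNReal) ≠ ⊤ := ENNReal.natCast_ne_top _
  haveI : Fact ((1 : ENNReal) ≤ ((2 * p : ℕ) : ENNReal)) :=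
    ⟨by exact_mod_cast (by omega : 1 ≤ 2 * p)⟩
  -- integrability of mixed products
  have hint : ∀ n m a b : ℕ, a + b = 2 * p →
      Integrable (fun ω => X n ω ^ a * X m ω ^ b) μ := by
    intro n m a b hab
    have htor : (((2 * p : ℕ) : ENNReal)).toReal = ((2 * p : ℕ) : ℝ) := rfl
    have habs : ∀ k : ℕ, Integrable (fun ω => |X k ω| ^ (2 * p)) μ := by
      intro k
      have h := (hmom k).integrable_norm_rpow hpe0 hpet
      rw [htor] at h
      simp only [Real.rpow_natCast, Real.norm_eq_abs] at h
      exact h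
    refine Integrable.mono' ((habs n).add (habs m)) ?_ ?_
    · exact ((hmom n).aestronglyMeasurable.pow a).mul ((hmom m).aestronglyMeasurable.pow b)
    · refine ae_of_all _ fun ω => ?_
      rw [Real.norm_eq_abs, abs_mul, abs_pow, abs_pow]
      rcases le_total |X n ω| |X m ω| with h | h
      · calc |X n ω| ^ a * |X m ω| ^ b
            ≤ |X m ω| ^ a * |X m ω| ^ b :=
              mul_le_mul_of_nonneg_right (pow_le_pow_left₀ (abs_nonneg _) h a)
                (pow_nonneg (abs_nonneg _) b)
          _ = |X m ω| ^ (2 * p) := by rw [← pow_add, hab]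
          _ ≤ |X n ω| ^ (2 * p) + |X m ω| ^ (2 * p) :=
              le_add_of_nonneg_left (pow_nonneg (abs_nonneg _) _)
      · calc |X n ω| ^ a * |X m ω| ^ b
            ≤ |X n ω| ^ a * |X n ω| ^ b :=
              mul_le_mul_of_nonneg_left (pow_le_pow_left₀ (abs_nonneg _) h b)
                (pow_nonneg (abs_nonneg _) a)
          _ = |X n ω| ^ (2 * p) := by rw [← pow_add, hab]
          _ ≤ |X n ω| ^ (2 * p) + |X m ω| ^ (2 * p) :=
              le_add_of_nonneg_right (pow_nonneg (abs_nonneg _) _)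
  -- the 2p-th moment of the difference tends to 0
  have hI0 : Tendsto (fun nm : ℕ × ℕ => ∫ ω, |X nm.1 ω - X nm.2 ω| ^ (2 * p) ∂μ)
      atTop (nhds 0) := by
    have heq : ∀ nm : ℕ × ℕ,
        ∫ ω, |X nm.1 ω - X nm.2 ω| ^ (2 * p) ∂μ
          = ∑ k ∈ Finset.range (2 * p + 1),
              ((-1 : ℝ) ^ (k + 2 * p) * ((2 * p).choose k))
                * ∫ ω, X nm.1 ω ^ k * X nm.2 ω ^ (2 * p - k) ∂μ := by
      intro nm
      have h1 : ∀ ω, |X nm.1 ω - X nm.2 ω| ^ (2 * p)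
          = ∑ k ∈ Finset.range (2 * p + 1),
              ((-1 : ℝ) ^ (k + 2 * p) * ((2 * p).choose k))
                * (X nm.1 ω ^ k * X nm.2 ω ^ (2 * p - k)) := by
        intro ω
        rw [(even_two_mul p).pow_abs, sub_pow]
        exact Finset.sum_congr rfl fun k _ => by ring
      simp_rw [h1]
      rw [integral_finset_sum]
      · exact Finset.sum_congr rfl fun k hk => integral_const_mul _ _
      · intro k hk
        rw [Finset.mem_range] at hk
        exact (hint nm.1 nm.2 k (2 * p - k) (by omega)).const_mul _
    have hterm : ∀ k ∈ Finset.range (2 * p + 1),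
        Tendsto (fun nm : ℕ × ℕ =>
            ((-1 : ℝ) ^ (k + 2 * p) * ((2 * p).choose k))
              * ∫ ω, X nm.1 ω ^ k * X nm.2 ω ^ (2 * p - k) ∂μ)
          atTop (nhds (((-1 : ℝ) ^ (k + 2 * p) * ((2 * p).choose k)) * r)) := by
      intro k hk
      rw [Finset.mem_range] at hk
      have hk' : 2 * p - (2 * p - k) = k := by omega
      have h := (hconv (2 * p - k) (by omega)).const_mul
        ((-1 : ℝ) ^ (k + 2 * p) * ((2 * p).choose k))
      rw [hk'] at h
      exact h
    have hT := tendsto_finset_sum (Finset.range (2 * p + 1)) hterm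
    have hsum : (∑ k ∈ Finset.range (2 * p + 1),
        ((-1 : ℝ) ^ (k + 2 * p) * ((2 * p).choose k)) * r) = 0 := by
      rw [← Finset.sum_mul]
      have hzero : (∑ k ∈ Finset.range (2 * p + 1),
          ((-1 : ℝ) ^ (k + 2 * p) * ((2 * p).choose k))) = 0 := by
        calc (∑ k ∈ Finset.range (2 * p + 1), ((-1 : ℝ) ^ (k + 2 * p) * ((2 * p).choose k)))
            = ∑ k ∈ Finset.range (2 * p + 1), ((-1 : ℝ) ^ k * ((2 * p).choose k)) := by
              refine Finset.sum_congr rfl fun k _ => ?_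
              rw [pow_add, pow_mul, neg_one_sq, one_pow, mul_one]
          _ = ((∑ k ∈ Finset.range (2 * p + 1), ((-1 : ℤ) ^ k * ((2 * p).choose k)) : ℤ) : ℝ) := by
              push_cast; ring
          _ = 0 := by rw [Int.alternating_sum_range_choose_of_ne hPne]; simp
      rw [hzero, zero_mul]
    rw [hsum] at hT
    exact Tendsto.congr (fun nm => (heq nm).symm) hT
  -- hence the eLpNorms of differences tend to 0
  have hsnorm0 : Tendsto (fun nm : ℕ × ℕ =>
      eLpNorm (X nm.1 - X nm.2) ((2 * p : ℕ) : ENNReal) μ) atTop (nhds 0) := by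
    have heq : ∀ nm : ℕ × ℕ,
        eLpNorm (X nm.1 - X nm.2) ((2 * p : ℕ) : ENNReal) μ
          = ENNReal.ofReal
              ((∫ ω, |X nm.1 ω - X nm.2 ω| ^ (2 * p) ∂μ) ^ (((2 * p : ℕ) : ℝ))⁻¹) := by
      intro nm
      have htor : (((2 * p : ℕ) : ENNReal)).toReal = ((2 * p : ℕ) : ℝ) := rfl
      rw [((hmom nm.1).sub (hmom nm.2)).eLpNorm_eq_integral_rpow_norm hpe0 hpet, htor]
      simp only [Real.rpow_natCast, Real.norm_eq_abs, Pi.sub_apply]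
    have h2 := hI0.rpow_const (p := (((2 * p : ℕ) : ℝ))⁻¹)
      (Or.inr (by positivity))
    rw [Real.zero_rpow (by positivity)] at h2
    have h3 := ENNReal.tendsto_ofReal h2
    rw [ENNReal.ofReal_zero] at h3
    exact Tendsto.congr (fun nm => (heq nm).symm) h3
  -- Cauchy in Lp
  set f : ℕ → Lp ℝ ((2 * p : ℕ) : ENNReal) μ := fun n => (hmom n).toLp (X n) with hfdef
  have hcauchy : CauchySeq f := by
    rw [MeasureTheory.Lp.cauchySeq_Lp_iff_cauchySeq_eLpNorm]
    refine Tendsto.congr (fun nm => ?_) hsnorm0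
    exact (eLpNorm_congr_ae ((hmom nm.1).coeFn_toLp.sub (hmom nm.2).coeFn_toLp)).symm
  obtain ⟨Ylp, hY⟩ := cauchySeq_tendsto_of_complete hcauchy
  refine ⟨⇑Ylp, ?_⟩
  have hsn : Tendsto (fun n => eLpNorm (X n - ⇑Ylp) ((2 * p : ℕ) : ENNReal) μ)
      atTop (nhds 0) := by
    have h := (MeasureTheory.Lp.tendsto_Lp_iff_tendsto_eLpNorm' f Ylp).mp hY
    refine Tendsto.congr (fun n => ?_) h
    exact eLpNorm_congr_ae ((hmom n).coeFn_toLp.sub EventuallyEq.rfl)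
  have hmemY : MemLp (⇑Ylp) ((2 * p : ℕ) : ENNReal) μ := MeasureTheory.Lp.memLp Ylp
  have heqn : ∀ n, ∫ ω, |X n ω - Ylp ω| ^ (2 * p) ∂μ
      = ((eLpNorm (X n - ⇑Ylp) ((2 * p : ℕ) : ENNReal) μ).toReal) ^ (2 * p) := by
    intro n
    have hmem := (hmom n).sub hmemY
    have hnonneg : (0 : ℝ) ≤ ∫ ω, |X n ω - Ylp ω| ^ (2 * p) ∂μ :=
      integral_nonneg fun ω => by positivity
    have htor : (((2 * p : ℕ) : ENNReal)).toReal = ((2 * p : ℕ) : ℝ) := rfl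
    have key : (∫ ω, ‖(X n - ⇑Ylp) ω‖ ^ (((2 * p : ℕ) : ℝ)) ∂μ)
        = ∫ ω, |X n ω - Ylp ω| ^ (2 * p) ∂μ := by
      simp only [Real.rpow_natCast, Real.norm_eq_abs, Pi.sub_apply]
    rw [hmem.eLpNorm_eq_integral_rpow_norm hpe0 hpet, htor, key,
      ENNReal.toReal_ofReal (Real.rpow_nonneg hnonneg _),
      ← Real.rpow_natCast ((∫ ω, |X n ω - Ylp ω| ^ (2 * p) ∂μ) ^ (((2 * p : ℕ) : ℝ))⁻¹) (2 * p),
      ← Real.rpow_mul hnonneg, inv_mul_cancel₀ (by positivity), Real.rpow_one]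
  have htR : Tendsto (fun n =>
      (eLpNorm (X n - ⇑Ylp) ((2 * p : ℕ) : ENNReal) μ).toReal) atTop (nhds 0) := by
    have hcont : Tendsto ENNReal.toReal (nhds 0) (nhds (0 : ℝ)) := by
      simpa using ENNReal.tendsto_toReal (a := 0) (by simp)
    exact hcont.comp hsn
  have hfinal := htR.pow (2 * p)
  rw [zero_pow hPne] at hfinal
  exact Tendsto.congr (fun n => (heqn n).symm) hfinal
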